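/- arXiv:0807.4696 — 7 statements merged into one kernel-verified Lean document; each statement's English description precedes it below -/
import Mathlib

section
/- Let n ≥ 1, let Λ ∈ Mat(n,ℂ) be a diagonal matrix whose diagonal entries are pairwise distinct and all nonzero, and let A ∈ Mat(n,ℂ) be arbitrary. Then the family {Λ, A} is irreducible if and only if the unital ℂ-subalgebra of Mat(n,ℂ) generated by the matrix units {E_{km} : (k,m) ∈ Supp(A)} is all of Mat(n,ℂ). -/
private lemma aux_single_eq_smul {n : ℕ} (q : Fin n) (c : ℂ) :
    (Pi.single q c : Fin n → ℂ) = c • (Pi.single q 1 : Fin n → ℂ) := by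
  funext i
  by_cases h : i = q
  · subst h; simp
  · simp [Pi.single_eq_of_ne h]

/-- From a vector in a `diagonal d`-invariant subspace with nonzero `k`-th
coordinate, extract the basis vector `e_k`. -/
private lemma aux_extract {n : ℕ} (d : Fin n → ℂ) (hdist : Function.Injective d)
    (V : Submodule ℂ (Fin n → ℂ))
    (hΛ : ∀ v ∈ V, (Matrix.diagonal d).mulVec v ∈ V)
    {v : Fin n → ℂ} (hv : v ∈ V) {k : Fin n} (hk : v k ≠ 0) :
    Pi.single k 1 ∈ V := by
  have key : ∀ s : Finset (Fin n), (fun i => (∏ j ∈ s, (d i - d j)) * v i) ∈ V := by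
    intro s
    induction s using Finset.induction_on with
    | empty => simpa using hv
    | insert a s ha ih =>
      have heq : (fun i => (∏ j ∈ insert a s, (d i - d j)) * v i)
          = (Matrix.diagonal d).mulVec (fun i => (∏ j ∈ s, (d i - d j)) * v i)
            - d a • (fun i => (∏ j ∈ s, (d i - d j)) * v i) := by
        funext i
        simp only [Matrix.mulVec_diagonal, Pi.sub_apply, Pi.smul_apply, smul_eq_mul,
          Finset.prod_insert ha]
        ring
      rw [heq]
      exact V.sub_mem (hΛ _ ih) (V.smul_mem _ ih)
  have h2 := key (Finset.univ.erase k)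
  set c : ℂ := (∏ j ∈ Finset.univ.erase k, (d k - d j)) * v k with hc
  have hcne : c ≠ 0 := by
    refine mul_ne_zero (Finset.prod_ne_zero_iff.2 fun j hj => ?_) hk
    exact sub_ne_zero.2 fun h => (Finset.mem_erase.1 hj).1 (hdist h).symm
  have heq2 : (fun i => (∏ j ∈ Finset.univ.erase k, (d i - d j)) * v i)
      = c • (Pi.single k 1 : Fin n → ℂ) := by
    funext i
    by_cases hik : i = k
    · subst hik; simp [hc]
    · have hz : (∏ j ∈ Finset.univ.erase k, (d i - d j)) = 0 :=
        Finset.prod_eq_zero (Finset.mem_erase.2 ⟨hik, Finset.mem_univ i⟩) (by simp)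
      simp [hz, Pi.single_eq_of_ne hik]
  rw [heq2] at h2
  have h3 := V.smul_mem c⁻¹ h2
  rwa [smul_smul, inv_mul_cancel₀ hcne, one_smul] at h3

private lemma aux_span_coord {n : ℕ} (P : Fin n → Prop) {v : Fin n → ℂ}
    (hv : v ∈ Submodule.span ℂ {x : Fin n → ℂ | ∃ m, P m ∧ x = Pi.single m 1})
    {j : Fin n} (hj : ¬ P j) : v j = 0 := by
  induction hv using Submodule.span_induction with
  | mem x hx =>
    obtain ⟨m, hm, rfl⟩ := hx
    exact Pi.single_eq_of_ne (by rintro rfl; exact hj hm) 1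
  | zero => rfl
  | add x y _ _ hx hy => simp [hx, hy]
  | smul c x _ hx => simp [hx]

private lemma aux_inv {n : ℕ} (M : Matrix (Fin n) (Fin n) ℂ) (s : Set (Fin n → ℂ))
    (h : ∀ x ∈ s, M.mulVec x ∈ Submodule.span ℂ s) :
    ∀ v ∈ Submodule.span ℂ s, M.mulVec v ∈ Submodule.span ℂ s := by
  intro v hv
  induction hv using Submodule.span_induction with
  | mem x hx => exact h x hx
  | zero => rw [Matrix.mulVec_zero]; exact Submodule.zero_mem _
  | add x y _ _ hx hy => rw [Matrix.mulVec_add]; exact Submodule.add_mem _ hx hy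
  | smul c x _ hx => rw [Matrix.mulVec_smul]; exact Submodule.smul_mem _ _ hx

/-- Irreducibility criterion: for `Λ = diagonal d` with pairwise distinct nonzero
diagonal entries and arbitrary `A`, the family `{Λ, A}` is irreducible iff
the unital subalgebra generated by the matrix units supported on `Supp A`
is all of `Mat(n, ℂ)`. -/
theorem stmt_0 (n : ℕ) (hn : 1 ≤ n) (d : Fin n → ℂ)
    (hdist : Function.Injective d) (hnz : ∀ k, d k ≠ 0)
    (A : Matrix (Fin n) (Fin n) ℂ) :
    (∀ V : Submodule ℂ (Fin n → ℂ),
        (∀ v ∈ V, (Matrix.diagonal d).mulVec v ∈ V) →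
        (∀ v ∈ V, A.mulVec v ∈ V) → V = ⊥ ∨ V = ⊤)
    ↔ Algebra.adjoin ℂ
        {E : Matrix (Fin n) (Fin n) ℂ |
          ∃ k m, A k m ≠ 0 ∧ E = Matrix.single k m 1} = ⊤ := by
  set r : Fin n → Fin n → Prop := fun k m => A k m ≠ 0 with hrdef
  set S : Set (Matrix (Fin n) (Fin n) ℂ) :=
    {E | ∃ k m, A k m ≠ 0 ∧ E = Matrix.single k m 1} with hSdef
  constructor
  · -- irreducibility implies the algebra is everything
    intro hirr
    -- Step 1: full reachability
    have hreach : ∀ k m : Fin n, Relation.ReflTransGen r k m := by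
      intro p k
      set V : Submodule ℂ (Fin n → ℂ) :=
        Submodule.span ℂ {x | ∃ m, Relation.ReflTransGen r m k ∧ x = Pi.single m 1} with hV
      have hΛ : ∀ v ∈ V, (Matrix.diagonal d).mulVec v ∈ V := by
        apply aux_inv
        rintro x ⟨m, hm, rfl⟩
        have : (Matrix.diagonal d).mulVec (Pi.single m 1) = d m • (Pi.single m 1 : Fin n → ℂ) := by
          funext i
          by_cases h : i = m
          · subst h; simp [Matrix.mulVec_diagonal]
          · simp [Matrix.mulVec_diagonal, Pi.single_eq_of_ne h]
        rw [this]
        exact Submodule.smul_mem _ _ (Submodule.subset_span ⟨m, hm, rfl⟩)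
      have hA : ∀ v ∈ V, A.mulVec v ∈ V := by
        apply aux_inv
        rintro x ⟨m, hm, rfl⟩
        have h1 : A.mulVec (Pi.single m 1) = ∑ q, Pi.single q (A q m) := by
          rw [Matrix.mulVec_single]
          simp only [MulOpposite.op_one, one_smul]
          exact (Finset.univ_sum_single fun q => A q m).symm
        rw [h1]
        apply Submodule.sum_mem
        intro q _
        by_cases hq : A q m = 0
        · rw [hq]; simp
        · rw [aux_single_eq_smul]
          exact Submodule.smul_mem _ _
            (Submodule.subset_span ⟨q, Relation.ReflTransGen.head hq hm, rfl⟩)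
      have hVne : V ≠ ⊥ := by
        intro hbot
        have hk : Pi.single k (1 : ℂ) ∈ V :=
          Submodule.subset_span ⟨k, Relation.ReflTransGen.refl, rfl⟩
        rw [hbot, Submodule.mem_bot] at hk
        have := congrFun hk k
        simp at this
      rcases hirr V hΛ hA with h | h
      · exact absurd h hVne
      · have hp : Pi.single p (1 : ℂ) ∈ V := h ▸ Submodule.mem_top
        by_contra hno
        have := aux_span_coord (fun m => Relation.ReflTransGen r m k) hp hno
        simp at this
    -- Step 2: all matrix units lie in the adjoined algebra
    have hgen : ∀ k m : Fin n, Relation.TransGen r k m →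
        Matrix.single k m 1 ∈ Algebra.adjoin ℂ S := by
      intro k m h
      induction h with
      | single h1 => exact Algebra.subset_adjoin ⟨_, _, h1, rfl⟩
      | tail h1 h2 ih =>
        rename_i b c
        have : Matrix.single k c (1 : ℂ)
            = Matrix.single k b 1 * Matrix.single b c 1 := by
          rw [Matrix.single_mul_single_same, one_mul]
        rw [this]
        exact mul_mem ih (Algebra.subset_adjoin ⟨_, _, h2, rfl⟩)
    have htg : ∀ k m : Fin n, k ≠ m → Relation.TransGen r k m := by
      intro k m hne
      rcases Relation.reflTransGen_iff_eq_or_transGen.1 (hreach k m) with h | h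
      · exact absurd h.symm hne
      · exact h
    have hall : ∀ k m : Fin n, Matrix.single k m (1 : ℂ) ∈ Algebra.adjoin ℂ S := by
      intro k m
      by_cases hex : ∃ p, p ≠ k
      · obtain ⟨p, hp⟩ := hex
        rcases eq_or_ne k m with rfl | hne
        · exact hgen _ _ ((htg k p (Ne.symm hp)).trans (htg p k hp))
        · exact hgen _ _ (htg k m hne)
      · push_neg at hex
        have hmk : m = k := hex m
        subst hmk
        have : Matrix.single m m (1 : ℂ) = 1 := by
          ext i j
          have hi := hex i
          have hj := hex j
          subst hi; subst hj
          simp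
        rw [this]
        exact one_mem _
    rw [eq_top_iff]
    intro M _
    rw [Matrix.matrix_eq_sum_single M]
    apply Subalgebra.sum_mem
    intro i _
    apply Subalgebra.sum_mem
    intro j _
    have : Matrix.single i j (M i j) = (M i j) • Matrix.single i j 1 := by
      rw [Matrix.smul_single, smul_eq_mul, mul_one]
    rw [this]
    exact Subalgebra.smul_mem _ (hall i j) _
  · -- the algebra being everything implies irreducibility
    intro htop
    -- Step 1: full reachability
    have hreach : ∀ k m : Fin n, Relation.ReflTransGen r k m := by
      intro k₀ m₀
      by_contra hno
      let B : Subalgebra ℂ (Matrix (Fin n) (Fin n) ℂ) :=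
        { carrier := {X | ∀ k m, Relation.ReflTransGen r k₀ k →
            ¬ Relation.ReflTransGen r k₀ m → X k m = 0}
          add_mem' := by
            intro X Y hX hY k m hk hm
            have h1 := hX k m hk hm
            have h2 := hY k m hk hm
            simp only [Matrix.add_apply, h1, h2, add_zero]
          mul_mem' := by
            intro X Y hX hY k m hk hm
            rw [Matrix.mul_apply]
            apply Finset.sum_eq_zero
            intro p _
            by_cases hp : Relation.ReflTransGen r k₀ p
            · rw [hY p m hp hm, mul_zero]
            · rw [hX k p hk hp, zero_mul]
          one_mem' := by
            intro k m hk hm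
            have hne : k ≠ m := fun h => hm (h ▸ hk)
            simp [Matrix.one_apply, hne]
          zero_mem' := by intro k m _ _; rfl
          algebraMap_mem' := by
            intro c k m hk hm
            have hne : k ≠ m := fun h => hm (h ▸ hk)
            simp [Matrix.algebraMap_matrix_apply, hne] }
      have hSB : S ⊆ B := by
        rintro E ⟨a, b, hab, rfl⟩
        intro k m hk hm
        by_cases hka : k = a
        · by_cases hmb : m = b
          · subst hka; subst hmb
            exact absurd (hk.tail hab) hm
          · exact Matrix.single_apply_of_ne _ _ _ _ _ (by tauto)
        · exact Matrix.single_apply_of_ne _ _ _ _ _ (by tauto)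
      have hle : Algebra.adjoin ℂ S ≤ B := Algebra.adjoin_le hSB
      rw [htop] at hle
      have hmem : Matrix.single k₀ m₀ (1 : ℂ) ∈ B := hle Algebra.mem_top
      have := hmem k₀ m₀ Relation.ReflTransGen.refl hno
      rw [Matrix.single_apply_same] at this
      exact one_ne_zero this
    -- Step 2: irreducibility
    intro V hΛ hA
    by_cases hbot : V = ⊥
    · exact Or.inl hbot
    · right
      obtain ⟨v, hv, hvne⟩ := Submodule.ne_bot_iff V |>.1 hbot
      obtain ⟨k, hk⟩ := Function.ne_iff.1 hvne
      have hek : Pi.single k (1 : ℂ) ∈ V := aux_extract d hdist V hΛ hv hk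
      have hall : ∀ m, Pi.single m (1 : ℂ) ∈ V := by
        intro m
        have hrm : Relation.ReflTransGen r m k := hreach m k
        induction hrm using Relation.ReflTransGen.head_induction_on with
        | refl => exact hek
        | head h1 h2 ih =>
          rename_i a c
          have hw : A.mulVec (Pi.single c 1) ∈ V := hA _ ih
          have hwa : (A.mulVec (Pi.single c 1)) a ≠ 0 := by
            rw [Matrix.mulVec_single]
            simpa using h1
          exact aux_extract d hdist V hΛ hw hwa
      rw [eq_top_iff]
      intro w _
      rw [← Finset.univ_sum_single w]
      apply Submodule.sum_mem
      intro i _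
      rw [aux_single_eq_smul]
      exact Submodule.smul_mem _ _ (hall i)
end

section
/- Let n ≥ 1, let Λ ∈ Mat(n,ℂ) be a diagonal matrix whose diagonal entries are pairwise distinct and all nonzero, and let A ∈ Mat(n,ℂ) be arbitrary. Then the family {Λ, A} is Schur irreducible if and only if the unital ℂ-subalgebra of Mat(n,ℂ) generated by the matrix units {E_{km} : (k,m) ∈ Supp(A) ∪ Supp(Aᵗ)} is all of Mat(n,ℂ). -/
open Matrix

private lemma aux_schur_of_conn {n : ℕ} (d : Fin n → ℂ)
    (hdist : Function.Injective d) (A : Matrix (Fin n) (Fin n) ℂ)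
    (k0 : Fin n)
    (conn : ∀ k m, Relation.EqvGen (fun k m => A k m ≠ 0 ∨ A m k ≠ 0) k m) :
    ∀ B : Matrix (Fin n) (Fin n) ℂ,
        B * Matrix.diagonal d = Matrix.diagonal d * B →
        B * A = A * B → ∃ c : ℂ, B = c • (1 : Matrix (Fin n) (Fin n) ℂ) := by
  intro B h1 h2
  have hdiag : ∀ k m, k ≠ m → B k m = 0 := by
    intro k m hkm
    have := congrFun (congrFun h1 k) m
    rw [Matrix.mul_diagonal, Matrix.diagonal_mul] at this
    have hd : d m ≠ d k := fun h => hkm (hdist h).symm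
    have h' : d m * B k m = d k * B k m := by linear_combination this
    rcases mul_eq_mul_right_iff.mp h' with h | h
    · exact absurd h hd
    · exact h
  have key : ∀ k m, Relation.EqvGen (fun k m => A k m ≠ 0 ∨ A m k ≠ 0) k m → B k k = B m m := by
    intro k m h
    induction h with
    | rel x y hxy =>
        rcases hxy with h | h
        · have e1 := congrFun (congrFun h2 x) y
          rw [Matrix.mul_apply, Matrix.mul_apply] at e1
          rw [Finset.sum_eq_single x (fun b _ hb => by rw [hdiag x b (Ne.symm hb), zero_mul])
              (by simp), Finset.sum_eq_single y (fun b _ hb => by rw [hdiag b y hb, mul_zero])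
              (by simp)] at e1
          exact mul_left_cancel₀ h (by rw [mul_comm (A x y)] at e1; linear_combination e1)
        · have e1 := congrFun (congrFun h2 y) x
          rw [Matrix.mul_apply, Matrix.mul_apply] at e1
          rw [Finset.sum_eq_single y (fun b _ hb => by rw [hdiag y b (Ne.symm hb), zero_mul])
              (by simp), Finset.sum_eq_single x (fun b _ hb => by rw [hdiag b x hb, mul_zero])
              (by simp)] at e1
          exact (mul_left_cancel₀ h (by rw [mul_comm (A y x)] at e1; linear_combination e1)).symm
    | refl x => rfl
    | symm x y _ ih => exact ih.symm
    | trans x y z _ _ ih1 ih2 => exact ih1.trans ih2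
  refine ⟨B k0 k0, ?_⟩
  ext k m
  by_cases hkm : k = m
  · subst hkm
    rw [key k0 k (conn k0 k)]
    simp
  · rw [hdiag k m hkm]
    simp [Matrix.one_apply_ne hkm]

private lemma aux_conn_of_schur {n : ℕ} (d : Fin n → ℂ)
    (A : Matrix (Fin n) (Fin n) ℂ)
    (hSchur : ∀ B : Matrix (Fin n) (Fin n) ℂ,
        B * Matrix.diagonal d = Matrix.diagonal d * B →
        B * A = A * B → ∃ c : ℂ, B = c • (1 : Matrix (Fin n) (Fin n) ℂ)) :
    ∀ k m, Relation.EqvGen (fun k m => A k m ≠ 0 ∨ A m k ≠ 0) k m := by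
  classical
  set e : Fin n → Fin n → Prop := fun k m => A k m ≠ 0 ∨ A m k ≠ 0 with he
  by_contra h
  push_neg at h
  obtain ⟨k0, m0, hkm⟩ := h
  set f : Fin n → ℂ := fun k => if Relation.EqvGen e k0 k then 1 else 0 with hf
  have hfe : ∀ k m, e k m → f k = f m := by
    intro k m hekm
    by_cases h : Relation.EqvGen e k0 k
    · rw [hf]; simp only [if_pos h, if_pos (h.trans _ _ _ (Relation.EqvGen.rel _ _ hekm))]
    · have h' : ¬ Relation.EqvGen e k0 m := fun hm =>
        h (hm.trans _ _ _ ((Relation.EqvGen.rel _ _ hekm).symm _ _))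
      rw [hf]; simp only [if_neg h, if_neg h']
  have h1 : Matrix.diagonal f * Matrix.diagonal d = Matrix.diagonal d * Matrix.diagonal f := by
    rw [Matrix.diagonal_mul_diagonal, Matrix.diagonal_mul_diagonal]
    ext k m
    rcases eq_or_ne k m with rfl | hne
    · simp [mul_comm]
    · simp [Matrix.diagonal_apply_ne _ hne]
  have h2 : Matrix.diagonal f * A = A * Matrix.diagonal f := by
    ext k m
    rw [Matrix.diagonal_mul, Matrix.mul_diagonal]
    by_cases hA : A k m = 0
    · rw [hA, mul_zero, zero_mul]
    · rw [hfe k m (Or.inl hA), mul_comm]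
  obtain ⟨c, hc⟩ := hSchur _ h1 h2
  have e1 : f k0 = c := by
    have := congrFun (congrFun hc k0) k0
    simpa using this
  have e2 : f m0 = c := by
    have := congrFun (congrFun hc m0) m0
    simpa using this
  have : f k0 = (1 : ℂ) := by rw [hf]; simp [Relation.EqvGen.refl]
  have hm0 : f m0 = (0 : ℂ) := by rw [hf]; simp [hkm]
  rw [this] at e1; rw [hm0] at e2
  exact one_ne_zero (e1.trans e2.symm)

private lemma aux_conn_of_top {n : ℕ} (A : Matrix (Fin n) (Fin n) ℂ)
    (htop : Algebra.adjoin ℂ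
        {E : Matrix (Fin n) (Fin n) ℂ |
          ∃ k m, (A k m ≠ 0 ∨ A.transpose k m ≠ 0) ∧ E = Matrix.single k m 1} = ⊤) :
    ∀ k m, Relation.EqvGen (fun k m => A k m ≠ 0 ∨ A m k ≠ 0) k m := by
  classical
  set e : Fin n → Fin n → Prop := fun k m => A k m ≠ 0 ∨ A m k ≠ 0 with he
  by_contra h
  push_neg at h
  obtain ⟨k0, m0, hkm⟩ := h
  have hmem : Matrix.single k0 m0 (1:ℂ) ∈ Algebra.adjoin ℂ
      {E : Matrix (Fin n) (Fin n) ℂ |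
        ∃ k m, (A k m ≠ 0 ∨ A.transpose k m ≠ 0) ∧ E = Matrix.single k m 1} := by
    rw [htop]; trivial
  have key : ∀ (X : Matrix (Fin n) (Fin n) ℂ) (_ : X ∈ Algebra.adjoin ℂ
      {E : Matrix (Fin n) (Fin n) ℂ |
        ∃ k m, (A k m ≠ 0 ∨ A.transpose k m ≠ 0) ∧ E = Matrix.single k m 1}),
      ∀ k m, ¬ Relation.EqvGen e k m → X k m = 0 := by
    intro X hX
    induction hX using Algebra.adjoin_induction with
    | mem x hx =>
        obtain ⟨a, b, hab, rfl⟩ := hx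
        intro k m h
        have heab : e a b := by
          rcases hab with h' | h'
          · exact Or.inl h'
          · exact Or.inr (by rwa [Matrix.transpose_apply] at h')
        rw [Matrix.single]
        simp only [Matrix.of_apply]
        by_cases h1 : a = k ∧ b = m
        · exact absurd (h1.1 ▸ h1.2 ▸ Relation.EqvGen.rel _ _ heab) h
        · simp [h1]
    | algebraMap r =>
        intro k m h
        have hkm' : k ≠ m := fun hk => h (hk ▸ Relation.EqvGen.refl k)
        simp [Matrix.algebraMap_matrix_apply, hkm']
    | add x y hx hy ihx ihy =>
        intro k m h
        rw [Matrix.add_apply, ihx k m h, ihy k m h, add_zero]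
    | mul x y hx hy ihx ihy =>
        intro k m h
        rw [Matrix.mul_apply]
        apply Finset.sum_eq_zero
        intro j _
        by_cases h1 : Relation.EqvGen e k j
        · have h2 : ¬ Relation.EqvGen e j m := fun hj => h (h1.trans _ _ _ hj)
          rw [ihy j m h2, mul_zero]
        · rw [ihx k j h1, zero_mul]
  have := key _ hmem k0 m0 hkm
  rw [Matrix.single] at this
  simp at this

private lemma aux_top_of_conn {n : ℕ} (A : Matrix (Fin n) (Fin n) ℂ)
    (conn : ∀ k m, Relation.EqvGen (fun k m => A k m ≠ 0 ∨ A m k ≠ 0) k m) :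
    Algebra.adjoin ℂ
        {E : Matrix (Fin n) (Fin n) ℂ |
          ∃ k m, (A k m ≠ 0 ∨ A.transpose k m ≠ 0) ∧ E = Matrix.single k m 1} = ⊤ := by
  classical
  set e : Fin n → Fin n → Prop := fun k m => A k m ≠ 0 ∨ A m k ≠ 0 with he
  set S : Set (Matrix (Fin n) (Fin n) ℂ) :=
    {E : Matrix (Fin n) (Fin n) ℂ |
      ∃ k m, (A k m ≠ 0 ∨ A.transpose k m ≠ 0) ∧ E = Matrix.single k m 1} with hS
  have hgen : ∀ k m, e k m → Matrix.single k m (1:ℂ) ∈ S := by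
    intro k m h
    refine ⟨k, m, ?_, rfl⟩
    rcases h with h | h
    · exact Or.inl h
    · exact Or.inr (by rwa [Matrix.transpose_apply])
  -- every off-diagonal-or-not std basis matrix connected pair is in the adjoin
  have key : ∀ k m, Relation.EqvGen e k m → k = m ∨
      (Matrix.single k m (1:ℂ) ∈ Algebra.adjoin ℂ S ∧
       Matrix.single m k (1:ℂ) ∈ Algebra.adjoin ℂ S) := by
    intro k m h
    induction h with
    | rel x y hxy =>
        refine Or.inr ⟨Algebra.subset_adjoin (hgen x y hxy), Algebra.subset_adjoin (hgen y x ?_)⟩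
        rcases hxy with h | h
        · exact Or.inr h
        · exact Or.inl h
    | refl x => exact Or.inl rfl
    | symm x y _ ih =>
        rcases ih with h | ⟨h1, h2⟩
        · exact Or.inl h.symm
        · exact Or.inr ⟨h2, h1⟩
    | trans x y z _ _ ih1 ih2 =>
        rcases ih1 with h | ⟨h1, h1'⟩
        · exact h ▸ ih2
        · rcases ih2 with h | ⟨h2, h2'⟩
          · exact Or.inr (h ▸ ⟨h1, h1'⟩)
          · refine Or.inr ⟨?_, ?_⟩
            · have := mul_mem h1 h2
              rwa [Matrix.single_mul_single_same, one_mul] at this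
            · have := mul_mem h2' h1'
              rwa [Matrix.single_mul_single_same, one_mul] at this
  have hall : ∀ k m, Matrix.single k m (1:ℂ) ∈ Algebra.adjoin ℂ S := by
    intro k m
    rcases key k m (conn k m) with h | ⟨h1, _⟩
    · subst h
      by_cases hone : ∀ m' : Fin n, m' = k
      · have : Matrix.single k k (1:ℂ) = 1 := by
          ext i j
          rw [hone i, hone j]
          simp [Matrix.single, Matrix.one_apply]
        rw [this]
        exact one_mem _
      · push_neg at hone
        obtain ⟨m', hm'⟩ := hone
        rcases key k m' (conn k m') with h | ⟨h1, h2⟩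
        · exact absurd h.symm hm'
        · have := mul_mem h1 h2
          rwa [Matrix.single_mul_single_same, one_mul] at this
    · exact h1
  rw [eq_top_iff]
  intro X _
  rw [Matrix.matrix_eq_sum_single X]
  apply sum_mem
  intro k _
  apply sum_mem
  intro m _
  have : Matrix.single k m (X k m) = X k m • Matrix.single k m (1:ℂ) := by
    rw [Matrix.smul_single, smul_eq_mul, mul_one]
  rw [this]
  exact Subalgebra.smul_mem _ (hall k m) _

/-- Schur irreducibility criterion: `{Λ, A}` is Schur irreducible iff the unital
subalgebra generated by the matrix units supported on `Supp A ∪ Supp Aᵗ` is all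
of `Mat(n, ℂ)`. -/
theorem stmt_1 (n : ℕ) (hn : 1 ≤ n) (d : Fin n → ℂ)
    (hdist : Function.Injective d) (hnz : ∀ k, d k ≠ 0)
    (A : Matrix (Fin n) (Fin n) ℂ) :
    (∀ B : Matrix (Fin n) (Fin n) ℂ,
        B * Matrix.diagonal d = Matrix.diagonal d * B →
        B * A = A * B → ∃ c : ℂ, B = c • (1 : Matrix (Fin n) (Fin n) ℂ))
    ↔ Algebra.adjoin ℂ
        {E : Matrix (Fin n) (Fin n) ℂ |
          ∃ k m, (A k m ≠ 0 ∨ A.transpose k m ≠ 0) ∧ E = Matrix.single k m 1} = ⊤ := by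
  constructor
  · intro hSchur
    exact aux_top_of_conn A (aux_conn_of_schur d A hSchur)
  · intro htop
    exact aux_schur_of_conn d hdist A ⟨0, hn⟩ (aux_conn_of_top A htop)
end

section
/- Let n ≥ 1 and let S ⊆ {1,…,n}² be a set of index pairs such that the pattern subspace s_S = {x ∈ Mat(n,ℂ) : x_{km} = 0 for (k,m) ∉ S} is a unital ℂ-subalgebra of Mat(n,ℂ) with s_S ≠ Mat(n,ℂ). Then there exists a nonempty proper subset i ⊆ {1,…,n} such that s_S ⊆ s_i, where s_i = {x ∈ Mat(n,ℂ) : x_{km} = 0 whenever k ∉ i and m ∈ i}. In particular, every maximal proper subalgebra of Mat(n,ℂ) of pattern form equals s_i for some nonempty proper subset i. -/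
/-- Every proper unital pattern subalgebra of `Mat(n, ℂ)` is contained in `s_i` for
some nonempty proper subset `i` of the index set.  In particular every maximal
proper pattern subalgebra is of the form `s_i`. -/
theorem stmt_4 (n : ℕ) (hn : 1 ≤ n) (S : Set (Fin n × Fin n))
    (hone : (1 : Matrix (Fin n) (Fin n) ℂ) ∈
        {x : Matrix (Fin n) (Fin n) ℂ | ∀ p ∉ S, x p.1 p.2 = 0})
    (hmul : ∀ x y : Matrix (Fin n) (Fin n) ℂ,
        (∀ p ∉ S, x p.1 p.2 = 0) → (∀ p ∉ S, y p.1 p.2 = 0) →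
        ∀ p ∉ S, (x * y) p.1 p.2 = 0)
    (hproper : {x : Matrix (Fin n) (Fin n) ℂ | ∀ p ∉ S, x p.1 p.2 = 0} ≠ Set.univ) :
    ∃ i : Set (Fin n), i.Nonempty ∧ i ≠ Set.univ ∧
      {x : Matrix (Fin n) (Fin n) ℂ | ∀ p ∉ S, x p.1 p.2 = 0} ⊆
        {x : Matrix (Fin n) (Fin n) ℂ | ∀ k m, k ∉ i → m ∈ i → x k m = 0} := by
  have hrefl : ∀ k : Fin n, (k, k) ∈ S := by
    intro k
    by_contra h
    have := hone (k, k) h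
    simp [Matrix.one_apply_eq] at this
  have hbasis : ∀ (k l : Fin n), (k, l) ∈ S →
      ∀ p ∉ S, (Matrix.single k l (1 : ℂ)) p.1 p.2 = 0 := by
    intro k l hkl p hp
    obtain ⟨p1, p2⟩ := p
    simp only [Matrix.single, Matrix.of_apply]
    split_ifs with h
    · exact absurd hkl (by obtain ⟨rfl, rfl⟩ := h; exact hp)
    · rfl
  have htrans : ∀ k l m : Fin n, (k, l) ∈ S → (l, m) ∈ S → (k, m) ∈ S := by
    intro k l m hkl hlm
    by_contra h
    have := hmul _ _ (hbasis k l hkl) (hbasis l m hlm) (k, m) h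
    simp [Matrix.single_mul_single_same] at this
  rw [Set.ne_univ_iff_exists_notMem] at hproper
  obtain ⟨x, hx⟩ := hproper
  simp only [Set.mem_setOf_eq] at hx
  push_neg at hx
  obtain ⟨⟨a, b⟩, hab, hxab⟩ := hx
  refine ⟨{m | (m, b) ∈ S}, ⟨b, hrefl b⟩, ?_, ?_⟩
  · intro h
    have : a ∈ {m | (m, b) ∈ S} := h ▸ Set.mem_univ a
    exact hab this
  · intro y hy k m hk hm
    apply hy (k, m)
    intro hkm
    exact hk (htrans k m b hkm hm)
end

section
/- Let n ≥ 1, let Λ ∈ Mat(n,ℂ) be a diagonal matrix whose diagonal entries are pairwise distinct and all nonzero, and let A ∈ Mat(n,ℂ) be arbitrary. Then the family {Λ, A} is irreducible if and only if the digraph Γ_A is strongly connected. -/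
lemma single_smul' {n : ℕ} (j : Fin n) (c x : ℂ) :
    (Pi.single j (c * x) : Fin n → ℂ) = c • (Pi.single j x : Fin n → ℂ) := by
  funext i
  simp [Pi.single_apply, mul_ite]

/-- Any subspace invariant under a diagonal matrix with distinct diagonal entries
contains the coordinate projections of each of its elements. -/
lemma coordMem {n : ℕ} (d : Fin n → ℂ) (hdist : Function.Injective d)
    (V : Submodule ℂ (Fin n → ℂ))
    (hΛ : ∀ v ∈ V, (Matrix.diagonal d).mulVec v ∈ V) :
    ∀ (s : Finset (Fin n)) (v : Fin n → ℂ), v ∈ V → (∀ j, v j ≠ 0 → j ∈ s) →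
      ∀ k, Pi.single k (v k) ∈ V := by
  intro s
  induction s using Finset.strongInduction with
  | _ s ih =>
    intro v hv hs k
    by_cases hvk : v k = 0
    · simpa [hvk] using V.zero_mem
    · have hk : k ∈ s := hs k hvk
      set w := (Matrix.diagonal d).mulVec v - d k • v with hw
      have hwV : w ∈ V := V.sub_mem (hΛ v hv) (V.smul_mem _ hv)
      have hwj : ∀ j, w j = (d j - d k) * v j := by
        intro j
        simp [hw, Matrix.mulVec_diagonal, sub_mul]
      have hws : ∀ j, w j ≠ 0 → j ∈ s.erase k := by
        intro j hj
        rw [hwj] at hj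
        have h1 : d j - d k ≠ 0 := left_ne_zero_of_mul hj
        have h2 : v j ≠ 0 := right_ne_zero_of_mul hj
        exact Finset.mem_erase.mpr ⟨fun h => h1 (by rw [h]; ring), hs j h2⟩
      have ihw : ∀ j, (Pi.single j (w j) : Fin n → ℂ) ∈ V :=
        ih (s.erase k) (Finset.erase_ssubset hk) w hwV hws
      have hsingle : ∀ j, j ≠ k → (Pi.single j (v j) : Fin n → ℂ) ∈ V := by
        intro j hj
        have hd : d j - d k ≠ 0 := sub_ne_zero.mpr (fun h => hj (hdist h))
        have heq : (Pi.single j (v j) : Fin n → ℂ)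
            = (d j - d k)⁻¹ • (Pi.single j (w j) : Fin n → ℂ) := by
          rw [hwj, ← single_smul']
          congr 1
          field_simp
        rw [heq]
        exact V.smul_mem _ (ihw j)
      have hrepr : (Pi.single k (v k) : Fin n → ℂ)
          = v - ∑ j ∈ s.erase k, Pi.single j (v j) := by
        funext i
        simp only [Pi.sub_apply, Finset.sum_apply, Pi.single_apply,
          Finset.sum_ite_eq, Finset.mem_erase]
        by_cases hik : i = k
        · simp [hik]
        · by_cases his : i ∈ s
          · simp [hik, his]
          · have hvi : v i = 0 := by by_contra h; exact his (hs i h)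
            simp [hik, his, hvi]
      rw [hrepr]
      exact V.sub_mem hv (Submodule.sum_mem _ fun j hj =>
        hsingle j (Finset.ne_of_mem_erase hj))

/-- Graph-theoretic irreducibility criterion: `{Λ, A}` is irreducible iff the
digraph `Γ_A` (edge `k → m` iff `A k m ≠ 0`) is strongly connected. -/
theorem stmt_6 (n : ℕ) (hn : 1 ≤ n) (d : Fin n → ℂ)
    (hdist : Function.Injective d) (hnz : ∀ k, d k ≠ 0)
    (A : Matrix (Fin n) (Fin n) ℂ) :
    (∀ V : Submodule ℂ (Fin n → ℂ),
        (∀ v ∈ V, (Matrix.diagonal d).mulVec v ∈ V) →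
        (∀ v ∈ V, A.mulVec v ∈ V) → V = ⊥ ∨ V = ⊤)
    ↔ ∀ k m : Fin n, Relation.ReflTransGen (fun a b => A a b ≠ 0) k m := by
  constructor
  · -- irreducible → strongly connected
    intro hirr k m
    set V : Submodule ℂ (Fin n → ℂ) :=
      { carrier := {v | ∀ j, v j ≠ 0 → Relation.ReflTransGen (fun a b => A a b ≠ 0) j m}
        zero_mem' := by intro j hj; simp at hj
        add_mem' := by
          intro a b ha hb j hj
          by_cases h : a j ≠ 0
          · exact ha j h
          · push_neg at h
            exact hb j (by simpa [h] using hj)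
        smul_mem' := by
          intro c a ha j hj
          exact ha j (right_ne_zero_of_mul (by simpa using hj)) } with hV
    have hΛ : ∀ v ∈ V, (Matrix.diagonal d).mulVec v ∈ V := by
      intro v hv j hj
      rw [Matrix.mulVec_diagonal] at hj
      exact hv j (right_ne_zero_of_mul hj)
    have hA : ∀ v ∈ V, A.mulVec v ∈ V := by
      intro v hv j hj
      have : ∃ i, A j i * v i ≠ 0 := by
        by_contra h
        push_neg at h
        exact hj (by simp [Matrix.mulVec, dotProduct,
          Finset.sum_eq_zero fun i _ => h i])
      obtain ⟨i, hi⟩ := this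
      exact Relation.ReflTransGen.head (left_ne_zero_of_mul hi)
        (hv i (right_ne_zero_of_mul hi))
    have hne : V ≠ ⊥ := by
      intro h
      have hm : (Pi.single m 1 : Fin n → ℂ) ∈ V := by
        intro j hj
        by_cases hjm : j = m
        · subst hjm; exact Relation.ReflTransGen.refl
        · exact absurd (Pi.single_eq_of_ne hjm 1) hj
      rw [h, Submodule.mem_bot] at hm
      have := congrFun hm m
      simp at this
    rcases hirr V hΛ hA with h | h
    · exact absurd h hne
    · have hk : (Pi.single k 1 : Fin n → ℂ) ∈ V := h ▸ Submodule.mem_top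
      exact hk k (by simp)
  · -- strongly connected → irreducible
    intro hconn V hΛ hA
    by_cases hbot : V = ⊥
    · exact Or.inl hbot
    right
    obtain ⟨v, hvV, hvne⟩ := Submodule.exists_mem_ne_zero_of_ne_bot hbot
    obtain ⟨m, hm⟩ : ∃ m, v m ≠ 0 := by
      by_contra h
      push_neg at h
      exact hvne (funext h)
    have hkey := coordMem d hdist V hΛ
    have hem : (Pi.single m 1 : Fin n → ℂ) ∈ V := by
      have h1 : (Pi.single m (v m) : Fin n → ℂ) ∈ V :=
        hkey Finset.univ v hvV (fun _ _ => Finset.mem_univ _) m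
      have heq : (Pi.single m 1 : Fin n → ℂ) = (v m)⁻¹ • (Pi.single m (v m) : Fin n → ℂ) := by
        rw [← single_smul', inv_mul_cancel₀ hm]
      rw [heq]
      exact V.smul_mem _ h1
    have hall : ∀ k, (Pi.single k 1 : Fin n → ℂ) ∈ V := by
      intro k
      have hpath := hconn k m
      induction hpath using Relation.ReflTransGen.head_induction_on with
      | refl => exact hem
      | head hab _ ih =>
        rename_i a b _
        have h1 : A.mulVec (Pi.single b 1) ∈ V := hA _ ih
        have h2 : (Pi.single a (A.mulVec (Pi.single b 1) a) : Fin n → ℂ) ∈ V :=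
          hkey Finset.univ _ h1 (fun _ _ => Finset.mem_univ _) a
        have h3 : A.mulVec (Pi.single b 1) a = A a b := by
          simp [Matrix.mulVec_single]
        rw [h3] at h2
        have heq : (Pi.single a 1 : Fin n → ℂ) = (A a b)⁻¹ • (Pi.single a (A a b) : Fin n → ℂ) := by
          rw [← single_smul', inv_mul_cancel₀ hab]
        rw [heq]
        exact V.smul_mem _ h2
    rw [Submodule.eq_top_iff']
    intro x
    have hx : x = ∑ j, (Pi.single j (x j) : Fin n → ℂ) := by
      funext i
      simp [Finset.sum_apply, Pi.single_apply, Finset.sum_ite_eq]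
    rw [hx]
    refine Submodule.sum_mem _ fun j _ => ?_
    have heq : (Pi.single j (x j) : Fin n → ℂ) = x j • (Pi.single j 1 : Fin n → ℂ) := by
      rw [← single_smul', mul_one]
    rw [heq]
    exact V.smul_mem _ (hall j)
end

section
/- Let n ≥ 1, let Λ ∈ Mat(n,ℂ) be a diagonal matrix whose diagonal entries are pairwise distinct and all nonzero, and let A ∈ Mat(n,ℂ) be arbitrary. Then the family {Λ, A} is Schur irreducible if and only if the digraph Γ_A is weakly connected. -/
/-- Graph-theoretic Schur irreducibility criterion: `{Λ, A}` is Schur irreducible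
iff the digraph `Γ_A` is weakly connected. -/
theorem stmt_7 (n : ℕ) (hn : 1 ≤ n) (d : Fin n → ℂ)
    (hdist : Function.Injective d) (hnz : ∀ k, d k ≠ 0)
    (A : Matrix (Fin n) (Fin n) ℂ) :
    (∀ B : Matrix (Fin n) (Fin n) ℂ,
        B * Matrix.diagonal d = Matrix.diagonal d * B →
        B * A = A * B → ∃ c : ℂ, B = c • (1 : Matrix (Fin n) (Fin n) ℂ))
    ↔ ∀ k m : Fin n,
        Relation.ReflTransGen (fun a b => A a b ≠ 0 ∨ A b a ≠ 0) k m := by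
  classical
  set r : Fin n → Fin n → Prop := fun a b => A a b ≠ 0 ∨ A b a ≠ 0 with hr
  have hsymm : ∀ a b, r a b → r b a := fun a b h => h.symm
  constructor
  · intro hirr k m
    by_contra hkm
    set f : Fin n → ℂ := fun j => if Relation.ReflTransGen r k j then 1 else 0 with hf
    have hconst : ∀ a b, r a b → f a = f b := by
      intro a b hab
      by_cases ha : Relation.ReflTransGen r k a
      · have hb : Relation.ReflTransGen r k b := ha.tail hab
        simp [hf, ha, hb]
      · have hb : ¬ Relation.ReflTransGen r k b := by
          intro hb; exact ha (hb.tail (hsymm _ _ hab))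
        simp [hf, ha, hb]
    have hd1 : Matrix.diagonal f * Matrix.diagonal d = Matrix.diagonal d * Matrix.diagonal f := by
      ext a b
      by_cases hab : a = b
      · subst hab; simp [Matrix.mul_diagonal, Matrix.diagonal_mul, mul_comm]
      · simp [Matrix.mul_diagonal, Matrix.diagonal_mul, Matrix.diagonal_apply_ne _ hab]
    have hd2 : Matrix.diagonal f * A = A * Matrix.diagonal f := by
      ext a b
      rw [Matrix.diagonal_mul, Matrix.mul_diagonal]
      by_cases hAb : A a b = 0
      · simp [hAb]
      · rw [hconst a b (Or.inl hAb)]; ring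
    obtain ⟨c, hc⟩ := hirr (Matrix.diagonal f) hd1 hd2
    have h1 : f k = c := by
      have := congrFun (congrFun hc k) k
      simpa [Matrix.one_apply] using this
    have h2 : f m = c := by
      have := congrFun (congrFun hc m) m
      simpa [Matrix.one_apply] using this
    have hk1 : f k = (1:ℂ) := by simp [hf, Relation.ReflTransGen.refl]
    have hm0 : f m = 0 := by simp [hf, hkm]
    rw [h1] at hk1
    rw [h2] at hm0
    exact one_ne_zero (hk1.symm.trans hm0)
  · intro hconn B hBD hBA
    have hdiag : ∀ a b, a ≠ b → B a b = 0 := by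
      intro a b hab
      have h := congrFun (congrFun hBD a) b
      rw [Matrix.mul_diagonal, Matrix.diagonal_mul] at h
      by_contra hB
      have h2 : B a b * d b = B a b * d a := by rw [h]; ring
      exact hab (hdist (mul_left_cancel₀ hB h2)).symm
    have hBdiag : B = Matrix.diagonal (fun j => B j j) := by
      ext a b
      by_cases hab : a = b
      · subst hab; simp
      · simp [Matrix.diagonal_apply_ne _ hab, hdiag a b hab]
    have hstep : ∀ a b, r a b → B a a = B b b := by
      intro a b hab
      have h := congrFun (congrFun hBA a) b
      rw [hBdiag, Matrix.diagonal_mul, Matrix.mul_diagonal] at h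
      rcases hab with h1 | h1
      · exact mul_right_cancel₀ h1 (by rw [h]; ring)
      · have h' := congrFun (congrFun hBA b) a
        rw [hBdiag, Matrix.diagonal_mul, Matrix.mul_diagonal] at h'
        exact (mul_right_cancel₀ h1 (by rw [h']; ring)).symm
    have hinv : ∀ a b, Relation.ReflTransGen r a b → B a a = B b b := by
      intro a b h
      induction h with
      | refl => rfl
      | tail _ h2 ih => exact ih.trans (hstep _ _ h2)
    set k₀ : Fin n := ⟨0, hn⟩
    refine ⟨B k₀ k₀, ?_⟩
    ext a b
    by_cases hab : a = b
    · subst hab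
      have := hinv k₀ a (hconn k₀ a)
      simp [this.symm, Matrix.one_apply]
    · simp [hdiag a b hab, Matrix.one_apply_ne hab]
end

section
/- Let n ≥ 1 and let G ⊆ {1,…,n}² be a set of index pairs. Then the unital ℂ-subalgebra of Mat(n,ℂ) generated by the matrix units {E_{km} : (k,m) ∈ G} equals Mat(n,ℂ) if and only if the digraph on vertex set {1,…,n} with edge set G is strongly connected, i.e., for every ordered pair of vertices (k,m) the pair (k,m) lies in the reflexive–transitive closure of the relation r defined by r k m ↔ (k,m) ∈ G. -/
/-- The subalgebra of matrices vanishing on the block `(reachable from k) × (not reachable)`. -/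
def lowerBlock (n : ℕ) (G : Set (Fin n × Fin n)) (k : Fin n) :
    Subalgebra ℂ (Matrix (Fin n) (Fin n) ℂ) where
  carrier := {M | ∀ a b, Relation.ReflTransGen (fun x y => (x, y) ∈ G) k a →
      ¬ Relation.ReflTransGen (fun x y => (x, y) ∈ G) k b → M a b = 0}
  mul_mem' := by
    intro M N hM hN a b ha hb
    rw [Matrix.mul_apply]
    apply Finset.sum_eq_zero
    intro c _
    by_cases hc : Relation.ReflTransGen (fun x y => (x, y) ∈ G) k c
    · rw [hN c b hc hb, mul_zero]
    · rw [hM a c ha hc, zero_mul]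
  one_mem' := by
    intro a b ha hb
    have hab : a ≠ b := fun h => hb (h ▸ ha)
    exact Matrix.one_apply_ne hab
  add_mem' := by
    intro M N hM hN a b ha hb
    simp [hM a b ha hb, hN a b ha hb]
  zero_mem' := by intro a b _ _; rfl
  algebraMap_mem' := by
    intro r a b ha hb
    have hab : a ≠ b := fun h => hb (h ▸ ha)
    simp [Matrix.algebraMap_eq_diagonal, Matrix.diagonal_apply_ne _ hab]

/-- A set `G` of index pairs generates `Mat(n, ℂ)` via matrix units iff the digraph
with edge set `G` is strongly connected. -/
theorem stmt_8 (n : ℕ) (hn : 1 ≤ n) (G : Set (Fin n × Fin n)) :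
    Algebra.adjoin ℂ
        {E : Matrix (Fin n) (Fin n) ℂ |
          ∃ p ∈ G, E = Matrix.single p.1 p.2 1} = ⊤
    ↔ ∀ k m : Fin n, Relation.ReflTransGen (fun a b => (a, b) ∈ G) k m := by
  set r : Fin n → Fin n → Prop := fun a b => (a, b) ∈ G with hr
  set S : Set (Matrix (Fin n) (Fin n) ℂ) :=
    {E | ∃ p ∈ G, E = Matrix.single p.1 p.2 1} with hS
  constructor
  · intro h k m
    by_contra hkm
    have hSB : S ⊆ (lowerBlock n G k : Set (Matrix (Fin n) (Fin n) ℂ)) := by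
      rintro E ⟨p, hp, rfl⟩ a b ha hb
      by_cases h1 : p.1 = a
      · by_cases h2 : p.2 = b
        · exfalso; exact hb (ha.tail (h1 ▸ h2 ▸ hp))
        · simp [Matrix.single, Matrix.of_apply]; tauto
      · simp [Matrix.single, Matrix.of_apply]; tauto
    have hle : Algebra.adjoin ℂ S ≤ lowerBlock n G k := Algebra.adjoin_le hSB
    have hmem : Matrix.single k m (1 : ℂ) ∈ Algebra.adjoin ℂ S := by
      rw [h]; trivial
    have := hle hmem k m Relation.ReflTransGen.refl hkm
    simp at this
  · intro h
    have key : ∀ i j : Fin n, Relation.ReflTransGen r i j → i = j ∨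
        Matrix.single i j (1 : ℂ) ∈ Algebra.adjoin ℂ S := by
      intro i j hij
      induction hij with
      | refl => exact Or.inl rfl
      | tail hab hedge ih =>
        rename_i b c
        right
        have hgen : Matrix.single b c (1 : ℂ) ∈ Algebra.adjoin ℂ S :=
          Algebra.subset_adjoin ⟨(b, c), hedge, rfl⟩
        rcases ih with rfl | hib
        · exact hgen
        · have := mul_mem hib hgen
          rwa [Matrix.single_mul_single_same, one_mul] at this
    have key2 : ∀ i j : Fin n, Matrix.single i j (1 : ℂ) ∈ Algebra.adjoin ℂ S := by
      intro i j
      by_cases hij : i = j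
      · subst hij
        by_cases hex : ∃ j' : Fin n, j' ≠ i
        · obtain ⟨j', hj'⟩ := hex
          have h1 : Matrix.single i j' (1 : ℂ) ∈ Algebra.adjoin ℂ S := by
            rcases key i j' (h i j') with h' | h'
            · exact absurd h'.symm hj'
            · exact h'
          have h2 : Matrix.single j' i (1 : ℂ) ∈ Algebra.adjoin ℂ S := by
            rcases key j' i (h j' i) with h' | h'
            · exact absurd h' hj'
            · exact h'
          have := mul_mem h1 h2
          rwa [Matrix.single_mul_single_same, one_mul] at this
        · push_neg at hex
          have : Matrix.single i i (1 : ℂ) = 1 := by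
            ext a b
            rw [hex a, hex b]
            simp
          rw [this]
          exact one_mem _
      · rcases key i j (h i j) with h' | h'
        · exact absurd h' hij
        · exact h'
    rw [eq_top_iff]
    intro M _
    rw [Matrix.matrix_eq_sum_single M]
    apply sum_mem; intro i _
    apply sum_mem; intro j _
    have : Matrix.single i j (M i j) = (M i j) • Matrix.single i j (1 : ℂ) := by
      simp
    rw [this]
    exact Subalgebra.smul_mem _ (key2 i j) _
end

section
/- Let n ≥ 1 and let G ⊆ {1,…,n}² be a set of index pairs. Then G is a minimal generating subset (i.e., the unital ℂ-subalgebra of Mat(n,ℂ) generated by {E_{km} : (k,m) ∈ G} equals Mat(n,ℂ), and no proper subset of G has this property) if and only if the digraph on vertex set {1,…,n} with edge set G is minimally strongly connected (it is strongly connected, and removing any single edge from G destroys strong connectedness). -/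
open Matrix Relation

private def supportAlg (n : ℕ) (G : Set (Fin n × Fin n)) :
    Subalgebra ℂ (Matrix (Fin n) (Fin n) ℂ) where
  carrier := {M | ∀ k m, ¬ ReflTransGen (fun a b => (a, b) ∈ G) k m → M k m = 0}
  mul_mem' := by
    intro M N hM hN k m hkm
    rw [Matrix.mul_apply]
    refine Finset.sum_eq_zero fun j _ => ?_
    by_cases h : ReflTransGen (fun a b => (a, b) ∈ G) k j
    · rw [hN j m (fun h2 => hkm (h.trans h2)), mul_zero]
    · rw [hM k j h, zero_mul]
  add_mem' := by
    intro M N hM hN k m hkm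
    simp [Matrix.add_apply, hM k m hkm, hN k m hkm]
  one_mem' := by
    intro k m hkm
    exact Matrix.one_apply_ne (fun h => hkm (h ▸ ReflTransGen.refl))
  algebraMap_mem' := by
    intro c k m hkm
    have hne : k ≠ m := fun h => hkm (by subst h; exact ReflTransGen.refl)
    rw [Algebra.algebraMap_eq_smul_one, Matrix.smul_apply,
      Matrix.one_apply_ne hne, smul_zero]

private lemma adjoin_eq_top_iff (n : ℕ) (hn : 1 ≤ n) (G : Set (Fin n × Fin n)) :
    Algebra.adjoin ℂ
        {E : Matrix (Fin n) (Fin n) ℂ | ∃ p ∈ G, E = Matrix.single p.1 p.2 1} = ⊤ ↔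
      ∀ k m : Fin n, ReflTransGen (fun a b => (a, b) ∈ G) k m := by
  set S : Set (Matrix (Fin n) (Fin n) ℂ) :=
    {E | ∃ p ∈ G, E = Matrix.single p.1 p.2 1} with hS
  constructor
  · intro htop
    by_contra hcon
    push_neg at hcon
    obtain ⟨k₀, m₀, hkm⟩ := hcon
    have hle : Algebra.adjoin ℂ S ≤ supportAlg n G := by
      apply Algebra.adjoin_le
      rintro E ⟨⟨a, b⟩, hab, rfl⟩ k m hkm'
      by_cases h : a = k ∧ b = m
      · exact absurd (h.1 ▸ h.2 ▸ ReflTransGen.single hab) hkm'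
      · simp only [Matrix.single, Matrix.of_apply, if_neg h]
    have hmem : Matrix.single k₀ m₀ (1 : ℂ) ∈ supportAlg n G :=
      hle (htop ▸ Algebra.mem_top)
    have h0 := hmem k₀ m₀ hkm
    simp [Matrix.single] at h0
  · intro hsc
    have key : ∀ k m : Fin n, ReflTransGen (fun a b => (a, b) ∈ G) k m →
        Matrix.single k m (1 : ℂ) ∈ Algebra.adjoin ℂ S ∨ k = m := by
      intro k m h
      induction h with
      | refl => exact Or.inr rfl
      | @tail b c h' hedge ih =>
        have hbc : Matrix.single b c (1 : ℂ) ∈ Algebra.adjoin ℂ S :=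
          Algebra.subset_adjoin ⟨(b, c), hedge, rfl⟩
        rcases ih with hkb | rfl
        · left
          have := mul_mem hkb hbc
          rwa [Matrix.single_mul_single_same, one_mul] at this
        · exact Or.inl hbc
    have hall : ∀ k m : Fin n, Matrix.single k m (1 : ℂ) ∈ Algebra.adjoin ℂ S := by
      intro k m
      rcases key k m (hsc k m) with h | rfl
      · exact h
      · rcases eq_or_lt_of_le hn with h1 | h2
        · -- n = 1 : the single matrix unit is the identity
          have hss : Subsingleton (Fin n) := by
            subst h1; infer_instance
          have : Matrix.single k k (1 : ℂ) = 1 := by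
            ext i j
            have hik : i = k := Subsingleton.elim i k
            have hjk : j = k := Subsingleton.elim j k
            subst hik; subst hjk
            simp [Matrix.single, Matrix.one_apply]
          rw [this]
          exact one_mem _
        · haveI : Nontrivial (Fin n) := Fin.nontrivial_iff_two_le.mpr h2
          obtain ⟨j, hj⟩ := exists_ne k
          have h1 := (key k j (hsc k j)).resolve_right (fun h => hj h.symm)
          have h2' := (key j k (hsc j k)).resolve_right hj
          have := mul_mem h1 h2'
          rwa [Matrix.single_mul_single_same, one_mul] at this
    rw [eq_top_iff]
    intro M _
    rw [Matrix.matrix_eq_sum_single M]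
    refine sum_mem fun i _ => sum_mem fun j _ => ?_
    have heq : Matrix.single i j (M i j) = (M i j) • Matrix.single i j (1 : ℂ) := by
      rw [Matrix.smul_single, smul_eq_mul, mul_one]
    rw [heq]
    exact Subalgebra.smul_mem _ (hall i j) _

/-- `G` is a minimal generating set of matrix units for `Mat(n, ℂ)` iff the digraph
with edge set `G` is minimally strongly connected. -/
theorem stmt_9 (n : ℕ) (hn : 1 ≤ n) (G : Set (Fin n × Fin n)) :
    (Algebra.adjoin ℂ
        {E : Matrix (Fin n) (Fin n) ℂ |
          ∃ p ∈ G, E = Matrix.single p.1 p.2 1} = ⊤ ∧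
      ∀ G' : Set (Fin n × Fin n), G' ⊂ G →
        Algebra.adjoin ℂ
          {E : Matrix (Fin n) (Fin n) ℂ |
            ∃ p ∈ G', E = Matrix.single p.1 p.2 1} ≠ ⊤)
    ↔ ((∀ k m : Fin n, Relation.ReflTransGen (fun a b => (a, b) ∈ G) k m) ∧
      ∀ e ∈ G, ¬ ∀ k m : Fin n,
        Relation.ReflTransGen (fun a b => (a, b) ∈ G \ {e}) k m) := by
  constructor
  · rintro ⟨h1, h2⟩
    refine ⟨(adjoin_eq_top_iff n hn G).mp h1, fun e he hsc => ?_⟩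
    exact h2 (G \ {e}) (Set.sdiff_singleton_ssubset.mpr he)
      ((adjoin_eq_top_iff n hn (G \ {e})).mpr hsc)
  · rintro ⟨h1, h2⟩
    refine ⟨(adjoin_eq_top_iff n hn G).mpr h1, fun G' hG' htop => ?_⟩
    obtain ⟨e, heG, heG'⟩ := Set.exists_of_ssubset hG'
    apply h2 e heG
    have hsub : G' ⊆ G \ {e} := fun x hx =>
      ⟨hG'.subset hx, fun hxe => heG' (Set.mem_singleton_iff.mp hxe ▸ hx)⟩
    have hmono : Algebra.adjoin ℂ
        {E : Matrix (Fin n) (Fin n) ℂ | ∃ p ∈ G', E = Matrix.single p.1 p.2 1} ≤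
        Algebra.adjoin ℂ
        {E : Matrix (Fin n) (Fin n) ℂ | ∃ p ∈ G \ {e}, E = Matrix.single p.1 p.2 1} := by
      apply Algebra.adjoin_mono
      rintro E ⟨p, hp, rfl⟩
      exact ⟨p, hsub hp, rfl⟩
    exact (adjoin_eq_top_iff n hn (G \ {e})).mp (top_le_iff.mp (htop ▸ hmono))
end
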